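/- Let p be a prime with p ≡ 1 (mod 4) dividing both the central value e and the mid-edge value b of a primitive magic square of squares. Then p ≡ 1 (mod 8), p also divides the opposite mid-edge value h, and modulo p one has a ≢ 0, with the congruences c² ≡ −a², i² ≡ −a², g² ≡ a², d² ≡ −2a², and f² ≡ 2a² (mod p). -/

import Mathlib

/-- A magic square of squares: integers `a,…,i` whose squares, arranged in a
3×3 grid with rows `(a²,b²,c²)`, `(d²,e²,f²)`, `(g²,h²,i²)`, are pairwise
distinct and all rows, columns and both main diagonals sum to `T`. -/
def IsMagicSquareOfSquares (a b c d e f g h i T : ℤ) : Prop :=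
  ([a^2, b^2, c^2, d^2, e^2, f^2, g^2, h^2, i^2] : List ℤ).Pairwise (· ≠ ·) ∧
  a^2 + b^2 + c^2 = T ∧ d^2 + e^2 + f^2 = T ∧ g^2 + h^2 + i^2 = T ∧
  a^2 + d^2 + g^2 = T ∧ b^2 + e^2 + h^2 = T ∧ c^2 + f^2 + i^2 = T ∧
  a^2 + e^2 + i^2 = T ∧ c^2 + e^2 + g^2 = T

/-- A magic square of squares is primitive if the gcd of its nine entries is 1. -/
def IsPrimitive (a b c d e f g h i : ℤ) : Prop :=
  Int.gcd (a^2) (Int.gcd (b^2) (Int.gcd (c^2) (Int.gcd (d^2) (Int.gcd (e^2)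
    (Int.gcd (f^2) (Int.gcd (g^2) (Int.gcd (h^2) (i^2)))))))) = 1

theorem midedge_zero_residue_class (a b c d e f g h i T : ℤ)
    (hms : IsMagicSquareOfSquares a b c d e f g h i T)
    (hprim : IsPrimitive a b c d e f g h i)
    (p : ℕ) (hp : p.Prime) (hp1 : p % 4 = 1)
    (hde : (p : ℤ) ∣ e) (hdb : (p : ℤ) ∣ b) :
    p % 8 = 1 ∧ (p : ℤ) ∣ h ∧ (a : ZMod p) ≠ 0 ∧
    (c : ZMod p)^2 = -(a : ZMod p)^2 ∧
    (i : ZMod p)^2 = -(a : ZMod p)^2 ∧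
    (g : ZMod p)^2 = (a : ZMod p)^2 ∧
    (d : ZMod p)^2 = -(2 * (a : ZMod p)^2) ∧
    (f : ZMod p)^2 = 2 * (a : ZMod p)^2 := by
  haveI : Fact p.Prime := ⟨hp⟩
  obtain ⟨-, h1, h2, h3, h4, h5, h6, h7, h8⟩ := hms
  have hT : T = 3 * e ^ 2 := by linarith
  have he0 : (e : ZMod p) = 0 := (ZMod.intCast_zmod_eq_zero_iff_dvd e p).mpr hde
  have hb0 : (b : ZMod p) = 0 := (ZMod.intCast_zmod_eq_zero_iff_dvd b p).mpr hdb
  have hT0 : (T : ZMod p) = 0 := by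
    have := congrArg (fun x : ℤ => (x : ZMod p)) hT
    push_cast at this
    rw [this, he0]; ring
  have cast8 : ∀ x y z : ℤ, x ^ 2 + y ^ 2 + z ^ 2 = T →
      (x : ZMod p) ^ 2 + (y : ZMod p) ^ 2 + (z : ZMod p) ^ 2 = 0 := by
    intro x y z hxyz
    have := congrArg (fun t : ℤ => (t : ZMod p)) hxyz
    push_cast at this
    rw [hT0] at this; exact this
  have q1 := cast8 a b c h1
  have q2 := cast8 d e f h2
  have q4 := cast8 a d g h4
  have q5 := cast8 b e h h5
  have q7 := cast8 a e i h7
  have q8 := cast8 c e g h8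
  simp only [hb0, he0] at q1 q2 q5 q7 q8
  -- h ≡ 0
  have hh0 : (h : ZMod p) = 0 := by
    have : (h : ZMod p) ^ 2 = 0 := by linear_combination q5
    exact pow_eq_zero_iff (n := 2) (by norm_num) |>.mp this
  have hdh : (p : ℤ) ∣ h := (ZMod.intCast_zmod_eq_zero_iff_dvd h p).mp hh0
  -- a ≢ 0
  have ha0 : (a : ZMod p) ≠ 0 := by
    intro ha
    have sq0 : ∀ x : ℤ, (x : ZMod p) ^ 2 = 0 → (p : ℤ) ∣ x ^ 2 := by
      intro x hx
      have : ((x ^ 2 : ℤ) : ZMod p) = 0 := by push_cast; exact hx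
      exact (ZMod.intCast_zmod_eq_zero_iff_dvd _ p).mp this
    have hc2 : (c : ZMod p) ^ 2 = 0 := by linear_combination q1 - (a : ZMod p) * ha
    have hi2 : (i : ZMod p) ^ 2 = 0 := by linear_combination q7 - (a : ZMod p) * ha
    have hg2 : (g : ZMod p) ^ 2 = 0 := by linear_combination q8 - hc2
    have hd2 : (d : ZMod p) ^ 2 = 0 := by
      linear_combination q4 - hg2 - (a : ZMod p) * ha
    have hf2 : (f : ZMod p) ^ 2 = 0 := by linear_combination q2 - hd2
    have hdvd : (p : ℤ) ∣ (Int.gcd (a^2) (Int.gcd (b^2) (Int.gcd (c^2) (Int.gcd (d^2)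
        (Int.gcd (e^2) (Int.gcd (f^2) (Int.gcd (g^2) (Int.gcd (h^2) (i^2)))))))) : ℤ) :=
      Int.dvd_coe_gcd (sq0 a (by rw [ha]; ring)) (Int.dvd_coe_gcd (sq0 b (by rw [hb0]; ring))
        (Int.dvd_coe_gcd (sq0 c hc2) (Int.dvd_coe_gcd (sq0 d hd2) (Int.dvd_coe_gcd (sq0 e (by rw [he0]; ring))
        (Int.dvd_coe_gcd (sq0 f hf2) (Int.dvd_coe_gcd (sq0 g hg2)
        (Int.dvd_coe_gcd (sq0 h (by rw [hh0]; ring)) (sq0 i hi2))))))))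
    rw [hprim] at hdvd
    have hd1 : p ∣ 1 := by exact_mod_cast hdvd
    have := Nat.le_of_dvd one_pos hd1
    have := hp.two_le
    omega
  have hc : (c : ZMod p) ^ 2 = -(a : ZMod p) ^ 2 := by linear_combination q1
  have hi : (i : ZMod p) ^ 2 = -(a : ZMod p) ^ 2 := by linear_combination q7
  have hg : (g : ZMod p) ^ 2 = (a : ZMod p) ^ 2 := by linear_combination q8 - hc
  have hd : (d : ZMod p) ^ 2 = -(2 * (a : ZMod p) ^ 2) := by linear_combination q4 - hg
  have hf : (f : ZMod p) ^ 2 = 2 * (a : ZMod p) ^ 2 := by linear_combination q2 - hd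
  have hp2 : p ≠ 2 := by omega
  have h2sq : IsSquare (2 : ZMod p) := by
    refine ⟨(f : ZMod p) * (a : ZMod p)⁻¹, ?_⟩
    field_simp
    linear_combination -hf
  have h8 := (ZMod.exists_sq_eq_two_iff (p := p) hp2).mp h2sq
  refine ⟨by omega, hdh, ha0, hc, hi, hg, hd, hf⟩
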